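/- arXiv:1709.00097 — 6 statements merged into one kernel-verified Lean document; each statement's English description precedes it below -/
import Mathlib

section
/- (Weighted Vietoris-Rips Lemma, main containment.) Let d ≥ 1, let σ = {x_0, …, x_ℓ} be a finite nonempty set of points in ℝ^d, let r : σ → (0,∞) be a weight function, let t > 0, and let 0 < t' ≤ t·(√(2d/(d+1)))^{-1}. If ‖x − y‖ ≤ t'·(r(x) + r(y)) for all distinct x, y ∈ σ, then the intersection ⋂_{x ∈ σ} B̄(x, t·r(x)) of the closed balls of radius t·r(x) centered at x is nonempty. -/
open Finset
open scoped RealInnerProductSpace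

private lemma vr_alg {A B C k D t t' : ℝ} (hA : 0 ≤ A) (hB : 0 ≤ B) (hC : 0 ≤ C)
    (hk1 : 1 ≤ k) (hkD : k ≤ D + 1) (hD : 1 ≤ D)
    (hBA : B ≤ A) (hBkC : B ≤ k * C) (htt : t' ^ 2 * (2 * D) ≤ t ^ 2 * (D + 1)) :
    t' ^ 2 * (A + B - 2 * C) ≤ t ^ 2 * A := by
  have h1 : (0:ℝ) < k := by linarith
  have h2 : (0:ℝ) < D + 1 := by linarith
  rw [← mul_le_mul_iff_right₀ (show (0:ℝ) < k * (D + 1) by positivity)]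
  nlinarith [mul_nonneg h2.le (mul_nonneg (sq_nonneg t') (sub_nonneg.2 hBkC)),
    mul_nonneg (mul_nonneg (sq_nonneg t') hB) (sub_nonneg.2 hkD),
    mul_nonneg (mul_nonneg (mul_nonneg (sq_nonneg t') (sub_nonneg.2 hBA))
      (by linarith : (0:ℝ) ≤ D - 1)) h1.le,
    mul_nonneg (mul_nonneg hA (sub_nonneg.2 htt)) h1.le]


set_option maxHeartbeats 2000000 in
private lemma vr_key {d : ℕ} (hd : 1 ≤ d) {ι : Type*} [Fintype ι] [Nonempty ι]
    (hcard : Fintype.card ι ≤ d + 1) (p : ι → EuclideanSpace ℝ (Fin d)) (R : ι → ℝ)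
    (hR : ∀ i, 0 < R i) {t t' : ℝ} (ht : 0 < t) (ht'pos : 0 < t')
    (ht' : t' ≤ t * (Real.sqrt (2 * d / (d + 1)))⁻¹)
    (hVR : ∀ i j, i ≠ j → ‖p i - p j‖ ≤ t' * (R i + R j)) :
    ∃ c, ∀ i, ‖c - p i‖ ≤ t * R i := by
  classical
  have hd1 : (1:ℝ) ≤ (d:ℝ) := by exact_mod_cast hd
  -- convert the scale hypothesis
  have hfrac : (0:ℝ) < 2 * d / (d + 1) := by positivity
  have hu : (0:ℝ) < Real.sqrt (2 * d / (d + 1)) := Real.sqrt_pos.2 hfrac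
  have htt : t' ^ 2 * (2 * d) ≤ t ^ 2 * (d + 1) := by
    have h1 : t' * Real.sqrt (2 * d / (d + 1)) ≤ t := by
      rw [← le_div_iff₀ hu] at *
      rwa [div_eq_mul_inv] at *
    have h2 : (t' * Real.sqrt (2 * d / (d + 1))) ^ 2 ≤ t ^ 2 :=
      pow_le_pow_left₀ (by positivity) h1 2
    rw [mul_pow, Real.sq_sqrt hfrac.le] at h2
    rw [div_eq_mul_inv] at h2
    calc t' ^ 2 * (2 * d) = t' ^ 2 * (2 * (d:ℝ) * ((d:ℝ)+1)⁻¹) * ((d:ℝ)+1) := by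
          field_simp
      _ ≤ t ^ 2 * (d + 1) := by
          apply mul_le_mul_of_nonneg_right h2 (by positivity)
  -- the objective function
  set c : (ι → ℝ) → EuclideanSpace ℝ (Fin d) := fun w => ∑ j, w j • p j with hc
  set L : (ι → ℝ) → ℝ := fun w => ∑ j, w j * (‖p j‖ ^ 2 - t ^ 2 * R j ^ 2) with hL
  set Ψ : (ι → ℝ) → ℝ := fun w => L w - ‖c w‖ ^ 2 with hΨ
  have hcont : Continuous Ψ := by
    apply Continuous.sub
    · exact continuous_finset_sum _ fun j _ => (continuous_apply j).mul continuous_const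
    · exact ((continuous_finset_sum _ fun j _ =>
        (continuous_apply j).smul continuous_const).norm.pow 2)
  obtain ⟨w, hwmem, hwmax⟩ := (isCompact_stdSimplex ℝ ι).exists_isMaxOn
    ⟨Pi.single (Classical.arbitrary ι) 1, single_mem_stdSimplex ℝ _⟩ hcont.continuousOn
  obtain ⟨hw0, hw1⟩ := hwmem
  refine ⟨c w, fun i => ?_⟩
  -- inner product double-sum identity
  have hinner : ‖c w‖ ^ 2 = ∑ j, ∑ l, w j * w l * ⟪p j, p l⟫ := by
    rw [← real_inner_self_eq_norm_sq, hc]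
    simp only [sum_inner, inner_sum, real_inner_smul_left, real_inner_smul_right, mul_sum]
    exact Finset.sum_congr rfl fun j _ => Finset.sum_congr rfl fun l _ => by
      rw [real_inner_comm (p j) (p l)]; ring
  -- generic weighted double sums
  have hsum1 : ∀ f : ι → ℝ, ∑ j, ∑ l, w j * w l * f j = ∑ j, w j * f j := by
    intro f
    refine Finset.sum_congr rfl fun j _ => ?_
    calc ∑ l, w j * w l * f j = (w j * f j) * ∑ l, w l := by
          rw [mul_sum]; exact Finset.sum_congr rfl fun l _ => by ring
      _ = w j * f j := by rw [hw1, mul_one]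
  have hsum2 : ∀ f : ι → ℝ, ∑ j, ∑ l, w j * w l * f l = ∑ j, w j * f j := by
    intro f
    rw [Finset.sum_comm]
    rw [← hsum1 f]
    exact Finset.sum_congr rfl fun j _ => Finset.sum_congr rfl fun l _ => by ring
  -- Step B : Ψ w ≤ 0
  have hstepB : Ψ w ≤ 0 := by
    set A := ∑ j, w j * R j ^ 2 with hA
    set Bv := (∑ j, w j * R j) ^ 2 with hBv
    set Cv := ∑ j, (w j * R j) ^ 2 with hCv
    have hA0 : 0 ≤ A := Finset.sum_nonneg fun j _ => mul_nonneg (hw0 j) (sq_nonneg _)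
    have hB0 : 0 ≤ Bv := sq_nonneg _
    have hC0 : 0 ≤ Cv := Finset.sum_nonneg fun j _ => sq_nonneg _
    have hBA : Bv ≤ A := by
      have h := sum_mul_sq_le_sq_mul_sq univ (fun j => Real.sqrt (w j))
        (fun j => Real.sqrt (w j) * R j)
      have e1 : ∀ j : ι, Real.sqrt (w j) * (Real.sqrt (w j) * R j) = w j * R j := fun j => by
        rw [← mul_assoc, Real.mul_self_sqrt (hw0 j)]
      have e2 : ∀ j : ι, Real.sqrt (w j) ^ 2 = w j := fun j => Real.sq_sqrt (hw0 j)
      have e3 : ∀ j : ι, (Real.sqrt (w j) * R j) ^ 2 = w j * R j ^ 2 := fun j => by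
        rw [mul_pow, Real.sq_sqrt (hw0 j)]
      simp only [e1, e2, e3] at h
      rwa [hw1, one_mul] at h
    have hBkC : Bv ≤ (Fintype.card ι : ℝ) * Cv := by
      have h := sq_sum_le_card_mul_sum_sq (s := (univ : Finset ι)) (f := fun j => w j * R j)
      simpa using h
    have hcross : ∑ j, ∑ l, (w j * R j) * (w l * R l) = Bv := by
      rw [hBv, sq, Finset.sum_mul_sum]
    have hRR : ∑ j, ∑ l, w j * w l * ((R j + R l) ^ 2) = 2 * A + 2 * Bv := by
      calc ∑ j, ∑ l, w j * w l * ((R j + R l) ^ 2)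
          = ∑ j, ∑ l, (w j * w l * R j ^ 2 + w j * w l * R l ^ 2
              + 2 * ((w j * R j) * (w l * R l))) := by
            refine sum_congr rfl fun j _ => sum_congr rfl fun l _ => ?_; ring
        _ = (∑ j, ∑ l, w j * w l * R j ^ 2) + (∑ j, ∑ l, w j * w l * R l ^ 2)
              + 2 * ∑ j, ∑ l, (w j * R j) * (w l * R l) := by
            simp only [Finset.sum_add_distrib, ← Finset.mul_sum]
        _ = 2 * A + 2 * Bv := by
            rw [hsum1 (fun j => R j ^ 2), hsum2 (fun j => R j ^ 2), hcross, hA]; ring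
    have hdouble : ∑ j, ∑ l, w j * w l * ‖p j - p l‖ ^ 2
        ≤ 2 * t' ^ 2 * (A + Bv - 2 * Cv) := by
      have hterm : ∀ j l : ι, w j * w l * ‖p j - p l‖ ^ 2
          ≤ w j * w l * (if j = l then 0 else t' ^ 2 * (R j + R l) ^ 2) := by
        intro j l
        by_cases hjl : j = l
        · simp [hjl]
        · rw [if_neg hjl]
          apply mul_le_mul_of_nonneg_left _ (mul_nonneg (hw0 j) (hw0 l))
          calc ‖p j - p l‖ ^ 2 ≤ (t' * (R j + R l)) ^ 2 :=
                pow_le_pow_left₀ (norm_nonneg _) (hVR j l hjl) 2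
            _ = t' ^ 2 * (R j + R l) ^ 2 := by ring
      calc ∑ j, ∑ l, w j * w l * ‖p j - p l‖ ^ 2
          ≤ ∑ j, ∑ l, w j * w l * (if j = l then 0 else t' ^ 2 * (R j + R l) ^ 2) :=
            Finset.sum_le_sum fun j _ => Finset.sum_le_sum fun l _ => hterm j l
        _ = (∑ j, ∑ l, w j * w l * (t' ^ 2 * (R j + R l) ^ 2))
              - ∑ j, (w j * w j * (t' ^ 2 * (R j + R j) ^ 2)) := by
            have hsplit : ∀ j l : ι, w j * w l * (if j = l then 0 else t' ^ 2 * (R j + R l) ^ 2)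
                = w j * w l * (t' ^ 2 * (R j + R l) ^ 2)
                  - (if j = l then w j * w l * (t' ^ 2 * (R j + R l) ^ 2) else 0) := by
              intro j l; by_cases hjl : j = l <;> simp [hjl]
            simp only [hsplit, Finset.sum_sub_distrib]
            congr 1
            refine sum_congr rfl fun j _ => ?_
            rw [Finset.sum_ite_eq]
            simp
        _ = 2 * t' ^ 2 * (A + Bv - 2 * Cv) := by
            have h1 : ∑ j, ∑ l, w j * w l * (t' ^ 2 * (R j + R l) ^ 2)
                = t' ^ 2 * ∑ j, ∑ l, w j * w l * ((R j + R l) ^ 2) := by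
              rw [Finset.mul_sum]
              refine sum_congr rfl fun j _ => ?_
              rw [Finset.mul_sum]
              exact sum_congr rfl fun l _ => by ring
            have h2 : ∑ j, (w j * w j * (t' ^ 2 * (R j + R j) ^ 2)) = 4 * t' ^ 2 * Cv := by
              rw [hCv, Finset.mul_sum]
              exact sum_congr rfl fun j _ => by ring
            rw [h1, h2, hRR]; ring
    have hiden : ∑ j, ∑ l, w j * w l * ‖p j - p l‖ ^ 2
        = 2 * (∑ j, w j * ‖p j‖ ^ 2) - 2 * ‖c w‖ ^ 2 := by
      calc ∑ j, ∑ l, w j * w l * ‖p j - p l‖ ^ 2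
          = ∑ j, ∑ l, (w j * w l * ‖p j‖ ^ 2 + w j * w l * ‖p l‖ ^ 2
              - 2 * (w j * w l * ⟪p j, p l⟫)) := by
            refine sum_congr rfl fun j _ => sum_congr rfl fun l _ => ?_
            rw [norm_sub_sq_real]; ring
        _ = (∑ j, ∑ l, w j * w l * ‖p j‖ ^ 2) + (∑ j, ∑ l, w j * w l * ‖p l‖ ^ 2)
              - 2 * ∑ j, ∑ l, w j * w l * ⟪p j, p l⟫ := by
            simp only [Finset.sum_sub_distrib, Finset.sum_add_distrib, ← Finset.mul_sum]
        _ = 2 * (∑ j, w j * ‖p j‖ ^ 2) - 2 * ‖c w‖ ^ 2 := by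
            rw [hsum1 (fun j => ‖p j‖ ^ 2), hsum2 (fun j => ‖p j‖ ^ 2), hinner]; ring
    have hcard' : (1 : ℝ) ≤ (Fintype.card ι : ℝ) := by
      have := Fintype.card_pos (α := ι)
      exact_mod_cast this
    have hcard'' : (Fintype.card ι : ℝ) ≤ (d : ℝ) + 1 := by exact_mod_cast hcard
    have halg := vr_alg hA0 hB0 hC0 hcard' hcard'' hd1 hBA hBkC htt
    have hΨeq : Ψ w = (∑ j, w j * ‖p j‖ ^ 2) - ‖c w‖ ^ 2 - t ^ 2 * A := by
      rw [hΨ]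
      simp only [hL, hA, mul_sub, Finset.sum_sub_distrib, Finset.mul_sum]
      have : ∀ j : ι, w j * (t ^ 2 * R j ^ 2) = t ^ 2 * (w j * R j ^ 2) := fun j => by ring
      simp only [this]
      ring
    rw [hΨeq]
    linarith
  -- Step A : ‖p i - c w‖^2 - t^2 * R i^2 ≤ Ψ w
  have hstepA : ‖p i - c w‖ ^ 2 - t ^ 2 * R i ^ 2 ≤ Ψ w := by
    set v := p i - c w with hv
    set N := ‖v‖ ^ 2 with hN
    have hN0 : 0 ≤ N := sq_nonneg _
    set D := (‖p i‖ ^ 2 - t ^ 2 * R i ^ 2) - L w - 2 * ⟪c w, v⟫ with hD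
    have hDs : ∀ s : ℝ, s ∈ Set.Ioc (0 : ℝ) 1 → D ≤ s * N := by
      intro s hs
      set ws : ι → ℝ := fun j => (1 - s) * w j + s * (if j = i then 1 else 0) with hws
      have hmem : ws ∈ stdSimplex ℝ ι := by
        constructor
        · intro j
          have h01 : (0 : ℝ) ≤ if j = i then (1 : ℝ) else 0 := by positivity
          have h1s : (0 : ℝ) ≤ 1 - s := by linarith [hs.2]
          exact add_nonneg (mul_nonneg h1s (hw0 j)) (mul_nonneg hs.1.le h01)
        · simp only [hws, Finset.sum_add_distrib, ← Finset.mul_sum, hw1,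
            Finset.sum_ite_eq' univ i, Finset.mem_univ, if_true]
          ring
      have hcws : c ws = c w + s • v := by
        rw [hc]
        have hterm : ∀ j : ι, ws j • p j
            = (1 - s) • (w j • p j) + (if j = i then s • p j else 0) := by
          intro j
          by_cases hj : j = i <;> simp [hws, hj, add_smul, mul_smul]
        simp only [hterm]
        rw [Finset.sum_add_distrib, ← Finset.smul_sum, Finset.sum_ite_eq' univ i]
        simp only [Finset.mem_univ, if_true, hv, hc]
        module
      have hLws : L ws = (1 - s) * L w + s * (‖p i‖ ^ 2 - t ^ 2 * R i ^ 2) := by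
        rw [hL]
        have hterm : ∀ j : ι, ws j * (‖p j‖ ^ 2 - t ^ 2 * R j ^ 2)
            = (1 - s) * (w j * (‖p j‖ ^ 2 - t ^ 2 * R j ^ 2))
              + (if j = i then s * (‖p j‖ ^ 2 - t ^ 2 * R j ^ 2) else 0) := by
          intro j
          by_cases hj : j = i <;> simp [hws, hj] <;> ring
        simp only [hterm]
        rw [Finset.sum_add_distrib, ← Finset.mul_sum, Finset.sum_ite_eq' univ i]
        simp only [Finset.mem_univ, if_true, hL]
      have hnorm : ‖c ws‖ ^ 2 = ‖c w‖ ^ 2 + 2 * s * ⟪c w, v⟫ + s ^ 2 * N := by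
        rw [hcws, norm_add_sq_real, real_inner_smul_right, hN, norm_smul]
        simp only [Real.norm_eq_abs, mul_pow, sq_abs]
        ring
      have hle : Ψ ws ≤ Ψ w := isMaxOn_iff.mp hwmax ws hmem
      rw [hΨ] at hle
      simp only at hle
      rw [hLws, hnorm] at hle
      have hsD : s * D ≤ s * (s * N) := by
        rw [hD]
        nlinarith [hle]
      exact (mul_le_mul_iff_right₀ hs.1).mp hsD
    have hD0 : D ≤ 0 := by
      by_contra hcon
      push_neg at hcon
      have hspos : 0 < D / (2 * (N + 1)) := by positivity
      have hsIoc : min 1 (D / (2 * (N + 1))) ∈ Set.Ioc (0 : ℝ) 1 :=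
        ⟨lt_min one_pos hspos, min_le_left _ _⟩
      have h1 := hDs _ hsIoc
      have h2 : min 1 (D / (2 * (N + 1))) * N ≤ (D / (2 * (N + 1))) * N :=
        mul_le_mul_of_nonneg_right (min_le_right _ _) hN0
      have h3 : (D / (2 * (N + 1))) * N < D := by
        rw [div_mul_eq_mul_div, div_lt_iff₀ (by positivity)]
        nlinarith
      linarith
    have hfinal : ‖p i - c w‖ ^ 2 - t ^ 2 * R i ^ 2 - Ψ w = D := by
      rw [hD, hΨ]
      simp only
      rw [hv, norm_sub_sq_real, inner_sub_right, real_inner_self_eq_norm_sq,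
        real_inner_comm (c w) (p i)]
      ring
    linarith
  -- conclude
  have hfin : ‖c w - p i‖ ^ 2 ≤ (t * R i) ^ 2 := by
    rw [norm_sub_rev]
    nlinarith [hstepA, hstepB]
  have := Real.sqrt_le_sqrt hfin
  rwa [Real.sqrt_sq (norm_nonneg _), Real.sqrt_sq (mul_pos ht (hR i)).le] at this


/-- Weighted Vietoris-Rips Lemma (main containment): if a finite set of points with
positive weights `r` forms a simplex of the weighted Vietoris-Rips complex at scale `t'`,
where `0 < t' ≤ t·(√(2d/(d+1)))⁻¹`, then the closed balls of radii `t·r(x)` have a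
common point, i.e. the set is a simplex of the weighted Čech complex at scale `t`. -/
theorem weighted_vietoris_rips_lemma {d : ℕ} (hd : 1 ≤ d)
    (σ : Finset (EuclideanSpace ℝ (Fin d))) (hσ : σ.Nonempty)
    (r : EuclideanSpace ℝ (Fin d) → ℝ) (hr : ∀ x ∈ σ, 0 < r x)
    (t t' : ℝ) (ht : 0 < t) (ht'pos : 0 < t')
    (ht' : t' ≤ t * (Real.sqrt (2 * d / (d + 1)))⁻¹)
    (hVR : ∀ x ∈ σ, ∀ y ∈ σ, x ≠ y → ‖x - y‖ ≤ t' * (r x + r y)) :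
    (⋂ x ∈ σ, Metric.closedBall x (t * r x)).Nonempty := by
  classical
  apply Convex.helly_theorem' (𝕜 := ℝ) (F := fun x => Metric.closedBall x (t * r x)) (s := σ)
    (fun x _ => convex_closedBall x (t * r x))
  intro I hIσ hIcard
  rcases I.eq_empty_or_nonempty with rfl | hIne
  · simp
  obtain ⟨x₀, hx₀⟩ := hIne
  have : Nonempty ↥I := ⟨⟨x₀, hx₀⟩⟩
  have hcard : Fintype.card ↥I ≤ d + 1 := by
    rw [Fintype.card_coe]
    rwa [finrank_euclideanSpace_fin] at hIcard
  obtain ⟨c, hc⟩ := vr_key hd hcard (fun i : ↥I => (i : EuclideanSpace ℝ (Fin d)))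
    (fun i : ↥I => r i) (fun i => hr i (hIσ i.2)) ht ht'pos ht'
    (fun i j hij => hVR i (hIσ i.2) j (hIσ j.2)
      (fun h => hij (Subtype.coe_injective h)))
  exact ⟨c, Set.mem_iInter₂.mpr fun x hx => by
    simpa [Metric.mem_closedBall, dist_eq_norm] using hc ⟨x, hx⟩⟩
end

section
/- (Stability for linear radius functions.) Let X and Y be finite nonempty subsets of ℝ^d, and suppose all radius functions are linear: there are positive constants r_x (x ∈ X) and s_y (y ∈ Y) with r_x(t) = r_x·t and s_y(t) = s_y·t. Let η ⊆ X × Y be a relation such that every x ∈ X is related to some y ∈ Y and every y ∈ Y is related to some x ∈ X, and let K be a compact subset of ℝ^d containing X ∪ Y. Then for every z ∈ K, |f_{X,r}(z) − f_{Y,s}(z)| ≤ diam(K) · max_{(x,y) ∈ η} |1/r_x − 1/s_y| + (max_{(x,y) ∈ η} ‖x − y‖) · max( max_{x ∈ X} 1/r_x, max_{y ∈ Y} 1/s_y ). -/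
private lemma entry_aux (iA iB a b u v A S1 S2 M : ℝ)
    (h : iA ≤ (a + b) * u) (hB : iB = a * v)
    (ha : 0 ≤ a) (hb : 0 ≤ b) (hu : 0 ≤ u)
    (haA : a ≤ A) (hS1 : |u - v| ≤ S1) (hbS2 : b ≤ S2) (huM : u ≤ M)
    (hA : 0 ≤ A) :
    iA - iB ≤ A * S1 + S2 * M := by
  have h1 : a * (u - v) ≤ A * S1 := by
    calc a * (u - v) ≤ a * |u - v| := by
          exact mul_le_mul_of_nonneg_left (le_abs_self _) ha
      _ ≤ A * S1 := mul_le_mul haA hS1 (abs_nonneg _) hA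
  have hS2 : 0 ≤ S2 := le_trans hb hbS2
  have h2 : b * u ≤ S2 * M := mul_le_mul hbS2 huM hu hS2
  nlinarith [h, hB, h1, h2]

/-- Stability of entry functions for linear radius functions `r_x(t) = r_x·t` and
`s_y(t) = s_y·t`: for every `z` in a compact set `K` containing `X ∪ Y`,
`|f_{X,r}(z) - f_{Y,s}(z)| ≤ diam(K)·max_{(x,y) ∈ η} |1/r_x - 1/s_y|
  + (max_{(x,y) ∈ η} ‖x - y‖)·max(max_{x ∈ X} 1/r_x, max_{y ∈ Y} 1/s_y)`,
where `f_{X,r}(z) = min_{x ∈ X} ‖z - x‖ / r_x`. -/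
theorem entry_function_stability_linear {d : ℕ}
    (X Y : Finset (EuclideanSpace ℝ (Fin d))) (hX : X.Nonempty) (hY : Y.Nonempty)
    (r s : EuclideanSpace ℝ (Fin d) → ℝ)
    (hr : ∀ x ∈ X, 0 < r x) (hs : ∀ y ∈ Y, 0 < s y)
    (η : Finset (EuclideanSpace ℝ (Fin d) × EuclideanSpace ℝ (Fin d)))
    (hηne : η.Nonempty)
    (hηXY : ∀ p ∈ η, p.1 ∈ X ∧ p.2 ∈ Y)
    (hη1 : ∀ x ∈ X, ∃ y ∈ Y, (x, y) ∈ η)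
    (hη2 : ∀ y ∈ Y, ∃ x ∈ X, (x, y) ∈ η)
    (K : Set (EuclideanSpace ℝ (Fin d))) (hK : IsCompact K)
    (hXK : ↑X ⊆ K) (hYK : ↑Y ⊆ K) :
    ∀ z ∈ K,
      |X.inf' hX (fun x => ‖z - x‖ / r x) - Y.inf' hY (fun y => ‖z - y‖ / s y)| ≤
        Metric.diam K * (η.sup' hηne fun p => |1 / r p.1 - 1 / s p.2|) +
          (η.sup' hηne fun p => ‖p.1 - p.2‖) *
            max (X.sup' hX fun x => 1 / r x) (Y.sup' hY fun y => 1 / s y) := by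
  intro z hz
  set S1 := η.sup' hηne fun p => |1 / r p.1 - 1 / s p.2| with hS1def
  set S2 := η.sup' hηne fun p => ‖p.1 - p.2‖ with hS2def
  set M := max (X.sup' hX fun x => 1 / r x) (Y.sup' hY fun y => 1 / s y) with hMdef
  have hA : (0:ℝ) ≤ Metric.diam K := Metric.diam_nonneg
  rw [abs_sub_le_iff]
  constructor
  · -- f_X(z) - f_Y(z) ≤ RHS
    obtain ⟨y, hy, hymin⟩ := Y.exists_mem_eq_inf' hY (fun y => ‖z - y‖ / s y)
    obtain ⟨x, hxX, hxy⟩ := hη2 y hy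
    have hx : x ∈ X := (hηXY _ hxy).1
    have hrx := hr x hx
    have hsy := hs y hy
    refine entry_aux _ _ ‖z - y‖ ‖x - y‖ (1 / r x) (1 / s y) _ S1 S2 M ?_ ?_
      (norm_nonneg _) (norm_nonneg _) (by positivity) ?_ ?_ ?_ ?_ hA
    · calc X.inf' hX (fun x => ‖z - x‖ / r x) ≤ ‖z - x‖ / r x :=
            Finset.inf'_le _ hx
        _ = ‖z - x‖ * (1 / r x) := by ring
        _ ≤ (‖z - y‖ + ‖x - y‖) * (1 / r x) := by
            apply mul_le_mul_of_nonneg_right _ (by positivity)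
            calc ‖z - x‖ = ‖(z - y) - (x - y)‖ := by rw [sub_sub_sub_cancel_right]
              _ ≤ ‖z - y‖ + ‖x - y‖ := norm_sub_le _ _
    · rw [hymin]; ring
    · rw [← dist_eq_norm]
      exact Metric.dist_le_diam_of_mem hK.isBounded hz (hYK hy)
    · exact Finset.le_sup' (f := fun p => |1 / r p.1 - 1 / s p.2|) hxy
    · exact Finset.le_sup' (f := fun p => ‖p.1 - p.2‖) hxy
    · exact le_max_of_le_left (Finset.le_sup' (f := fun x => 1 / r x) hx)
  · -- f_Y(z) - f_X(z) ≤ RHS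
    obtain ⟨x, hx, hxmin⟩ := X.exists_mem_eq_inf' hX (fun x => ‖z - x‖ / r x)
    obtain ⟨y, hyY, hxy⟩ := hη1 x hx
    have hy : y ∈ Y := (hηXY _ hxy).2
    have hrx := hr x hx
    have hsy := hs y hy
    refine entry_aux _ _ ‖z - x‖ ‖y - x‖ (1 / s y) (1 / r x) _ S1 S2 M ?_ ?_
      (norm_nonneg _) (norm_nonneg _) (by positivity) ?_ ?_ ?_ ?_ hA
    · calc Y.inf' hY (fun y => ‖z - y‖ / s y) ≤ ‖z - y‖ / s y :=
            Finset.inf'_le _ hy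
        _ = ‖z - y‖ * (1 / s y) := by ring
        _ ≤ (‖z - x‖ + ‖y - x‖) * (1 / s y) := by
            apply mul_le_mul_of_nonneg_right _ (by positivity)
            calc ‖z - y‖ = ‖(z - x) - (y - x)‖ := by rw [sub_sub_sub_cancel_right]
              _ ≤ ‖z - x‖ + ‖y - x‖ := norm_sub_le _ _
    · rw [hxmin]; ring
    · rw [← dist_eq_norm]
      exact Metric.dist_le_diam_of_mem hK.isBounded hz (hXK hx)
    · rw [abs_sub_comm]
      exact Finset.le_sup' (f := fun p => |1 / r p.1 - 1 / s p.2|) hxy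
    · rw [norm_sub_rev]
      exact Finset.le_sup' (f := fun p => ‖p.1 - p.2‖) hxy
    · exact le_max_of_le_right (Finset.le_sup' (f := fun y => 1 / s y) hy)
end

section
/- (Weight-function stability.) Let X be a finite nonempty subset of ℝ^d, and let r and s each assign to every x ∈ X a bijection of [0,∞) that is differentiable with strictly positive derivative. Let K be a compact subset of ℝ^d containing X. Then for every z ∈ K, |f_{X,r}(z) − f_{X,s}(z)| ≤ max_{x ∈ X} sup_{u ∈ [0, diam K]} |r_x^{-1}(u) − s_x^{-1}(u)|. -/
/-- Weight-function stability: `X` is a finite nonempty subset of `ℝ^d` with two radius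
functions `r` and `s` (with inverses `ri`, `si` and derivatives `r'`, `s'`), each a
bijection of `[0,∞)` differentiable with strictly positive derivative, and `K` is a
compact set containing `X`. Then for every `z ∈ K`,
`|f_{X,r}(z) - f_{X,s}(z)| ≤ max_{x ∈ X} sup_{u ∈ [0, diam K]} |r_x⁻¹(u) - s_x⁻¹(u)|`. -/
theorem entry_function_weight_stability {d : ℕ}
    (X : Finset (EuclideanSpace ℝ (Fin d))) (hX : X.Nonempty)
    (r ri r' s si s' : EuclideanSpace ℝ (Fin d) → ℝ → ℝ)
    (hrbij : ∀ x ∈ X, Set.BijOn (r x) (Set.Ici 0) (Set.Ici 0))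
    (hrinv : ∀ x ∈ X, Set.InvOn (ri x) (r x) (Set.Ici 0) (Set.Ici 0))
    (hrderiv : ∀ x ∈ X, ∀ u ∈ Set.Ici (0:ℝ),
      HasDerivWithinAt (r x) (r' x u) (Set.Ici 0) u)
    (hrpos : ∀ x ∈ X, ∀ u ∈ Set.Ici (0:ℝ), 0 < r' x u)
    (hsbij : ∀ x ∈ X, Set.BijOn (s x) (Set.Ici 0) (Set.Ici 0))
    (hsinv : ∀ x ∈ X, Set.InvOn (si x) (s x) (Set.Ici 0) (Set.Ici 0))
    (hsderiv : ∀ x ∈ X, ∀ u ∈ Set.Ici (0:ℝ),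
      HasDerivWithinAt (s x) (s' x u) (Set.Ici 0) u)
    (hspos : ∀ x ∈ X, ∀ u ∈ Set.Ici (0:ℝ), 0 < s' x u)
    (K : Set (EuclideanSpace ℝ (Fin d))) (hK : IsCompact K) (hXK : ↑X ⊆ K) :
    ∀ z ∈ K,
      |X.inf' hX (fun x => ri x ‖z - x‖) - X.inf' hX (fun x => si x ‖z - x‖)| ≤
        X.sup' hX fun x =>
          sSup ((fun u => |ri x u - si x u|) '' Set.Icc 0 (Metric.diam K)) := by
  intro z hz
  set D := Metric.diam K with hD
  -- monotonicity of inverses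
  have mono : ∀ (g gi g' : EuclideanSpace ℝ (Fin d) → ℝ → ℝ),
      (∀ x ∈ X, Set.BijOn (g x) (Set.Ici 0) (Set.Ici 0)) →
      (∀ x ∈ X, Set.InvOn (gi x) (g x) (Set.Ici 0) (Set.Ici 0)) →
      (∀ x ∈ X, ∀ u ∈ Set.Ici (0:ℝ), HasDerivWithinAt (g x) (g' x u) (Set.Ici 0) u) →
      (∀ x ∈ X, ∀ u ∈ Set.Ici (0:ℝ), 0 < g' x u) →
      ∀ x ∈ X, MonotoneOn (gi x) (Set.Ici 0) ∧ Set.MapsTo (gi x) (Set.Ici 0) (Set.Ici 0) := by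
    intro g gi g' hbij hinv hderiv hpos x hx
    have hsm : StrictMonoOn (g x) (Set.Ici 0) := by
      apply strictMonoOn_of_hasDerivWithinAt_pos (convex_Ici 0) (f' := g' x)
      · exact fun u hu => (hderiv x hx u hu).continuousWithinAt
      · intro u hu
        rw [interior_Ici] at hu
        exact (hderiv x hx u (Set.mem_Ici.mpr (le_of_lt hu))).mono interior_subset
      · intro u hu
        rw [interior_Ici] at hu
        exact hpos x hx u (Set.mem_Ici.mpr (le_of_lt hu))
    have hmt : Set.MapsTo (gi x) (Set.Ici 0) (Set.Ici 0) := by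
      intro u hu
      obtain ⟨v, hv, rfl⟩ := (hbij x hx).surjOn hu
      rw [(hinv x hx).1 hv]; exact hv
    refine ⟨?_, hmt⟩
    intro u hu v hv huv
    by_contra h
    push_neg at h
    have : g x (gi x v) < g x (gi x u) := hsm (hmt hv) (hmt hu) h
    rw [(hinv x hx).2 hu, (hinv x hx).2 hv] at this
    exact absurd huv (not_le.mpr this)
  have hmr := mono r ri r' hrbij hrinv hrderiv hrpos
  have hms := mono s si s' hsbij hsinv hsderiv hspos
  -- pointwise bound:
  have key : ∀ x ∈ X, |ri x ‖z - x‖ - si x ‖z - x‖| ≤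
      sSup ((fun u => |ri x u - si x u|) '' Set.Icc 0 D) := by
    intro x hx
    have hxK : (x : EuclideanSpace ℝ (Fin d)) ∈ K := hXK hx
    have hnle : ‖z - x‖ ≤ D := by
      rw [← dist_eq_norm]
      exact Metric.dist_le_diam_of_mem hK.isBounded hz hxK
    have hmem : ‖z - x‖ ∈ Set.Icc (0:ℝ) D := ⟨norm_nonneg _, hnle⟩
    have hDnn : (0:ℝ) ≤ D := le_trans (norm_nonneg _) hnle
    have hbdd : BddAbove ((fun u => |ri x u - si x u|) '' Set.Icc 0 D) := by
      refine ⟨max (ri x D) (si x D), ?_⟩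
      rintro _ ⟨u, hu, rfl⟩
      have hru : ri x u ∈ Set.Ici (0:ℝ) := (hmr x hx).2 (Set.Icc_subset_Ici_self hu)
      have hsu : si x u ∈ Set.Ici (0:ℝ) := (hms x hx).2 (Set.Icc_subset_Ici_self hu)
      have hr2 : ri x u ≤ ri x D := (hmr x hx).1 (Set.Icc_subset_Ici_self hu) hDnn hu.2
      have hs2 : si x u ≤ si x D := (hms x hx).1 (Set.Icc_subset_Ici_self hu) hDnn hu.2
      rw [abs_sub_le_iff]
      constructor
      · calc ri x u - si x u ≤ ri x u - 0 := by linarith [Set.mem_Ici.mp hsu]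
          _ ≤ max (ri x D) (si x D) := by simpa using le_max_of_le_left hr2
      · calc si x u - ri x u ≤ si x u - 0 := by linarith [Set.mem_Ici.mp hru]
          _ ≤ max (ri x D) (si x D) := by simpa using le_max_of_le_right hs2
    exact le_csSup hbdd ⟨‖z - x‖, hmem, rfl⟩
  -- reduce to pointwise
  set M := X.sup' hX fun x =>
    sSup ((fun u => |ri x u - si x u|) '' Set.Icc 0 D) with hM
  have key' : ∀ x ∈ X, |ri x ‖z - x‖ - si x ‖z - x‖| ≤ M :=
    fun x hx => le_trans (key x hx)
      (Finset.le_sup' (fun x => sSup ((fun u => |ri x u - si x u|) '' Set.Icc 0 D)) hx)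
  rw [abs_sub_le_iff]
  constructor
  · obtain ⟨x₀, hx₀, hx₀eq⟩ := X.exists_mem_eq_inf' hX (fun x => si x ‖z - x‖)
    calc X.inf' hX (fun x => ri x ‖z - x‖) - X.inf' hX (fun x => si x ‖z - x‖)
        ≤ ri x₀ ‖z - x₀‖ - si x₀ ‖z - x₀‖ := by
          have := Finset.inf'_le (f := fun x => ri x ‖z - x‖) hx₀
          rw [hx₀eq]; linarith
      _ ≤ M := le_trans (le_abs_self _) (key' x₀ hx₀)
  · obtain ⟨x₀, hx₀, hx₀eq⟩ := X.exists_mem_eq_inf' hX (fun x => ri x ‖z - x‖)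
    calc X.inf' hX (fun x => si x ‖z - x‖) - X.inf' hX (fun x => ri x ‖z - x‖)
        ≤ si x₀ ‖z - x₀‖ - ri x₀ ‖z - x₀‖ := by
          have := Finset.inf'_le (f := fun x => si x ‖z - x‖) hx₀
          rw [hx₀eq]; linarith
      _ ≤ M := by
          have h := key' x₀ hx₀
          rw [abs_sub_comm] at h
          exact le_trans (le_abs_self _) h
end

section
/- (Minimizer lies in the convex hull of the active points.) Let x_0, …, x_ℓ be points in ℝ^d, let r_0, …, r_ℓ > 0, and define f : ℝ^d → ℝ by f(y) = max_{0 ≤ j ≤ ℓ} ‖x_j − y‖/r_j. Suppose y_0 ∈ ℝ^d is a global minimizer of f. Then y_0 belongs to the convex hull of the set {x_j : ‖x_j − y_0‖/r_j = f(y_0)} of points at which the maximum is attained. -/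
local notation "⟪" x ", " y "⟫_ℝ" => @inner ℝ _ _ x y


/-- A global minimizer `y₀` of `f(y) = max_j ‖x_j - y‖ / r_j` lies in the convex hull of
the set of points `x_j` at which the maximum is attained. -/
theorem minimizer_mem_convexHull_active {d ℓ : ℕ}
    (p : Fin (ℓ + 1) → EuclideanSpace ℝ (Fin d))
    (r : Fin (ℓ + 1) → ℝ) (hr : ∀ j, 0 < r j)
    (y₀ : EuclideanSpace ℝ (Fin d))
    (hmin : ∀ y : EuclideanSpace ℝ (Fin d),
      (Finset.univ.sup' Finset.univ_nonempty fun j => ‖p j - y₀‖ / r j) ≤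
        Finset.univ.sup' Finset.univ_nonempty fun j => ‖p j - y‖ / r j) :
    y₀ ∈ convexHull ℝ {z : EuclideanSpace ℝ (Fin d) | ∃ j, p j = z ∧
      ‖p j - y₀‖ / r j = Finset.univ.sup' Finset.univ_nonempty
        fun i => ‖p i - y₀‖ / r i} := by
  by_contra hy
  set M : ℝ := Finset.univ.sup' Finset.univ_nonempty fun i => ‖p i - y₀‖ / r i with hM
  set S : Set (EuclideanSpace ℝ (Fin d)) :=
    {z | ∃ j, p j = z ∧ ‖p j - y₀‖ / r j = M} with hS
  obtain ⟨j₀, -, hj₀⟩ := Finset.exists_mem_eq_sup' (Finset.univ_nonempty)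
    (fun i : Fin (ℓ + 1) => ‖p i - y₀‖ / r i)
  have hSne : S.Nonempty := ⟨p j₀, j₀, rfl, hj₀.symm⟩
  have hSfin : S.Finite := (Set.finite_range p).subset (by rintro z ⟨j, rfl, -⟩; exact ⟨j, rfl⟩)
  set K : Set (EuclideanSpace ℝ (Fin d)) := convexHull ℝ S with hK
  have hKconv : Convex ℝ K := convex_convexHull ℝ S
  have hKcl : IsClosed K := (hSfin.isCompact_convexHull (𝕜 := ℝ)).isClosed
  have hKne : K.Nonempty := hSne.mono (subset_convexHull ℝ S)
  obtain ⟨w, hwK, hw⟩ := exists_norm_eq_iInf_of_complete_convex hKne hKcl.isComplete hKconv y₀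
  have hproj : ∀ z ∈ K, ⟪y₀ - w, z - w⟫_ℝ ≤ 0 :=
    (norm_eq_iInf_iff_real_inner_le_zero hKconv hwK).mp hw
  set v : EuclideanSpace ℝ (Fin d) := w - y₀ with hv
  have hvne : v ≠ 0 := by
    intro h
    apply hy
    have : w = y₀ := by
      have := sub_eq_zero.mp h; exact this
    rwa [this] at hwK
  have hδ : (0:ℝ) < ‖v‖ ^ 2 := by
    have := norm_pos_iff.mpr hvne
    positivity
  -- For active j, the inner product ⟪p j - y₀, v⟫ is at least ‖v‖².
  have hactive : ∀ j, ‖p j - y₀‖ / r j = M → ‖v‖ ^ 2 ≤ ⟪p j - y₀, v⟫_ℝ := by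
    intro j hj
    have hpj : p j ∈ K := subset_convexHull ℝ S ⟨j, rfl, hj⟩
    have h1 : ⟪y₀ - w, p j - w⟫_ℝ ≤ 0 := hproj _ hpj
    have h2 : ⟪p j - y₀, v⟫_ℝ = ⟪p j - w, v⟫_ℝ + ⟪v, v⟫_ℝ := by
      rw [hv]
      rw [← inner_add_left]
      congr 1
      abel
    have h3 : (0:ℝ) ≤ ⟪p j - w, v⟫_ℝ := by
      have : ⟪y₀ - w, p j - w⟫_ℝ = - ⟪p j - w, v⟫_ℝ := by
        rw [hv, real_inner_comm, ← inner_neg_right]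
        congr 1
        abel
      linarith [this ▸ h1]
    rw [h2, real_inner_self_eq_norm_sq]
    linarith
  -- Each term is eventually < M as t → 0⁺ along y₀ + t • v.
  have hev : ∀ j : Fin (ℓ + 1),
      ∀ᶠ t in nhdsWithin (0:ℝ) (Set.Ioi 0), ‖p j - (y₀ + t • v)‖ / r j < M := by
    intro j
    by_cases hj : ‖p j - y₀‖ / r j = M
    · -- active: strict decrease for all t ∈ (0, 1]
      filter_upwards [Ioc_mem_nhdsGT_of_mem (by norm_num : (0:ℝ) ∈ Set.Ico 0 1)]
        with t ht
      obtain ⟨ht0, ht1⟩ := ht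
      have hin := hactive j hj
      have hexp : ‖p j - (y₀ + t • v)‖ ^ 2
          = ‖p j - y₀‖ ^ 2 - 2 * (t * ⟪p j - y₀, v⟫_ℝ) + t ^ 2 * ‖v‖ ^ 2 := by
        have : p j - (y₀ + t • v) = (p j - y₀) - t • v := by abel
        rw [this, norm_sub_sq_real, real_inner_smul_right, norm_smul]
        simp [mul_pow, abs_of_nonneg ht0.le]
      have hlt : ‖p j - (y₀ + t • v)‖ ^ 2 < ‖p j - y₀‖ ^ 2 := by
        rw [hexp]
        have h1 : t * ‖v‖ ^ 2 ≤ t * ⟪p j - y₀, v⟫_ℝ := mul_le_mul_of_nonneg_left hin ht0.le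
        have h2 : t ^ 2 * ‖v‖ ^ 2 ≤ t * ‖v‖ ^ 2 := by nlinarith [mul_le_mul_of_nonneg_right (mul_le_mul_of_nonneg_left ht1 ht0.le) hδ.le]
        have h3 : 0 < t * ‖v‖ ^ 2 := mul_pos ht0 hδ
        linarith
      have hnlt : ‖p j - (y₀ + t • v)‖ < ‖p j - y₀‖ := by
        nlinarith [norm_nonneg (p j - (y₀ + t • v)), norm_nonneg (p j - y₀)]
      calc ‖p j - (y₀ + t • v)‖ / r j < ‖p j - y₀‖ / r j := by
            gcongr
            exact hr j
        _ = M := hj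
    · -- inactive: continuity
      have hjlt : ‖p j - y₀‖ / r j < M :=
        lt_of_le_of_ne (Finset.le_sup' (f := fun i => ‖p i - y₀‖ / r i) (Finset.mem_univ j)) hj
      have hcont : ContinuousAt (fun t : ℝ => ‖p j - (y₀ + t • v)‖ / r j) 0 := by
        apply ContinuousAt.div_const
        exact ((continuous_const.sub
          (continuous_const.add (continuous_id.smul continuous_const))).norm).continuousAt
      have h0 : (fun t : ℝ => ‖p j - (y₀ + t • v)‖ / r j) 0 < M := by
        simpa using hjlt
      have := hcont.eventually_lt continuousAt_const h0
      exact this.filter_mono nhdsWithin_le_nhds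
  have hall : ∀ᶠ t in nhdsWithin (0:ℝ) (Set.Ioi 0),
      ∀ j, ‖p j - (y₀ + t • v)‖ / r j < M := Filter.eventually_all.mpr hev
  obtain ⟨t, ht⟩ := hall.exists
  have hlt : (Finset.univ.sup' Finset.univ_nonempty
      fun j => ‖p j - (y₀ + t • v)‖ / r j) < M :=
    (Finset.sup'_lt_iff _).mpr fun j _ => ht j
  exact absurd (hmin (y₀ + t • v)) (not_le.mpr hlt)
end

section
/- (Strict descent in a direction making positive inner product with all active displacement vectors.) Let x_0, …, x_n be points in ℝ^d, let r_0, …, r_n > 0, let y_0 ∈ ℝ^d, and let v ∈ ℝ^d be a nonzero vector with ⟨v, x_j − y_0⟩ > 0 for all 0 ≤ j ≤ n. Then there exists λ_1 > 0 such that for all 0 < λ < λ_1, max_{0 ≤ j ≤ n} ‖x_j − (y_0 + λv)‖/r_j < max_{0 ≤ j ≤ n} ‖x_j − y_0‖/r_j. -/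
open scoped RealInnerProductSpace

/-- Strict descent: if `v` is a nonzero vector making positive inner product with every
displacement `x_j - y₀`, then for all small enough `λ > 0` the value of
`max_j ‖x_j - y‖ / r_j` strictly decreases when moving from `y₀` to `y₀ + λv`. -/
theorem strict_descent_of_pos_inner {d n : ℕ}
    (p : Fin (n + 1) → EuclideanSpace ℝ (Fin d))
    (r : Fin (n + 1) → ℝ) (hr : ∀ j, 0 < r j)
    (y₀ v : EuclideanSpace ℝ (Fin d)) (hv : v ≠ 0)
    (hpos : ∀ j, 0 < ⟪v, p j - y₀⟫) :
    ∃ lam₁ > (0:ℝ), ∀ lam : ℝ, 0 < lam → lam < lam₁ →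
      (Finset.univ.sup' Finset.univ_nonempty fun j => ‖p j - (y₀ + lam • v)‖ / r j) <
        Finset.univ.sup' Finset.univ_nonempty fun j => ‖p j - y₀‖ / r j := by
  have hv2 : (0:ℝ) < ‖v‖ ^ 2 := by
    have : 0 < ‖v‖ := norm_pos_iff.mpr hv
    positivity
  refine ⟨Finset.univ.inf' Finset.univ_nonempty
      (fun j => 2 * ⟪v, p j - y₀⟫ / ‖v‖ ^ 2), ?_, ?_⟩
  · rw [gt_iff_lt, Finset.lt_inf'_iff]
    intro j _
    exact div_pos (by linarith [hpos j]) hv2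
  · intro lam hlam hlt
    rw [Finset.sup'_lt_iff]
    intro j _
    have hj : lam < 2 * ⟪v, p j - y₀⟫ / ‖v‖ ^ 2 :=
      lt_of_lt_of_le hlt (Finset.inf'_le _ (Finset.mem_univ j))
    have hkey : lam * ‖v‖ ^ 2 < 2 * ⟪v, p j - y₀⟫ := by
      rw [← lt_div_iff₀ hv2]; exact hj
    have hrw : p j - (y₀ + lam • v) = (p j - y₀) - lam • v := by abel
    have hsq : ‖(p j - y₀) - lam • v‖ ^ 2 < ‖p j - y₀‖ ^ 2 := by
      have h1 : ‖(p j - y₀) - lam • v‖ ^ 2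
          = ‖p j - y₀‖ ^ 2 - 2 * (lam * ⟪v, p j - y₀⟫) + lam ^ 2 * ‖v‖ ^ 2 := by
        rw [norm_sub_sq_real, inner_smul_right, real_inner_comm (p j - y₀) v, norm_smul]
        simp [mul_pow, sq_abs]
      rw [h1]
      nlinarith [hpos j]
    have hnorm : ‖(p j - y₀) - lam • v‖ < ‖p j - y₀‖ :=
      lt_of_pow_lt_pow_left₀ 2 (norm_nonneg _) hsq
    have hle : ‖p j - y₀‖ / r j ≤
        Finset.univ.sup' Finset.univ_nonempty fun j => ‖p j - y₀‖ / r j :=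
      Finset.le_sup' (fun j => ‖p j - y₀‖ / r j) (Finset.mem_univ j)
    calc ‖p j - (y₀ + lam • v)‖ / r j = ‖(p j - y₀) - lam • v‖ / r j := by rw [hrw]
    _ < ‖p j - y₀‖ / r j := (div_lt_div_iff_of_pos_right (hr j)).mpr hnorm
    _ ≤ _ := hle
end

section
/- (Key algebraic inequality in the weighted Vietoris-Rips Lemma.) Let d ≥ 1 be an integer and let r_0, r_1, a_0, a_1 be positive reals with a_0·r_0 ≥ a_1·r_1. Then (d − 1 + 4a_0/a_1)·r_0² − 2(d+1)·r_0·r_1 + (d−1)·r_1² ≥ 0, and consequently (r_0 + r_1)² / ( r_0² + (2a_0·r_0²)/(a_1·d) + r_1² ) ≤ 2d/(d+1). -/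
/-- Key algebraic inequality in the proof of the weighted Vietoris-Rips Lemma. -/
theorem key_algebraic_inequality (d : ℕ) (hd : 1 ≤ d) (r₀ r₁ a₀ a₁ : ℝ)
    (hr₀ : 0 < r₀) (hr₁ : 0 < r₁) (ha₀ : 0 < a₀) (ha₁ : 0 < a₁)
    (h : a₁ * r₁ ≤ a₀ * r₀) :
    0 ≤ ((d : ℝ) - 1 + 4 * a₀ / a₁) * r₀ ^ 2 - 2 * ((d : ℝ) + 1) * r₀ * r₁ +
        ((d : ℝ) - 1) * r₁ ^ 2 ∧
      (r₀ + r₁) ^ 2 / (r₀ ^ 2 + 2 * a₀ * r₀ ^ 2 / (a₁ * (d : ℝ)) + r₁ ^ 2) ≤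
        2 * (d : ℝ) / ((d : ℝ) + 1) := by
  have hd1 : (1 : ℝ) ≤ (d : ℝ) := by exact_mod_cast hd
  have hd0 : (0 : ℝ) < (d : ℝ) := lt_of_lt_of_le one_pos hd1
  have hkey : 0 ≤ ((d : ℝ) - 1 + 4 * a₀ / a₁) * r₀ ^ 2 - 2 * ((d : ℝ) + 1) * r₀ * r₁ +
      ((d : ℝ) - 1) * r₁ ^ 2 := by
    have h4 : 4 * r₀ * r₁ ≤ 4 * a₀ / a₁ * r₀ ^ 2 := by
      rw [div_mul_eq_mul_div, le_div_iff₀ ha₁]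
      nlinarith
    nlinarith [sq_nonneg (r₀ - r₁), mul_nonneg (sub_nonneg.2 hd1) (sq_nonneg (r₀ - r₁))]
  refine ⟨hkey, ?_⟩
  have hden : 0 < r₀ ^ 2 + 2 * a₀ * r₀ ^ 2 / (a₁ * (d : ℝ)) + r₁ ^ 2 := by
    have : 0 < 2 * a₀ * r₀ ^ 2 / (a₁ * (d : ℝ)) :=
      div_pos (by positivity) (by positivity)
    positivity
  rw [div_le_div_iff₀ hden (by linarith)]
  have hkey' : 0 ≤ a₁ * (((d : ℝ) - 1) * r₀ ^ 2 - 2 * ((d : ℝ) + 1) * r₀ * r₁ +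
      ((d : ℝ) - 1) * r₁ ^ 2) + 4 * a₀ * r₀ ^ 2 := by
    have := mul_nonneg ha₁.le hkey
    have h2 : a₁ * (4 * a₀ / a₁ * r₀ ^ 2) = 4 * a₀ * r₀ ^ 2 := by field_simp
    nlinarith
  have hne : a₁ * (d : ℝ) ≠ 0 := by positivity
  field_simp
  nlinarith [mul_nonneg (mul_nonneg hd0.le hd0.le) hkey', mul_nonneg hd0.le hkey']
end
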